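/- Let n ≥ 1, let f : ℝⁿ \ {0} → ℂ be continuous and positively homogeneous of degree −n, and let T be an invertible linear map on ℝⁿ. Then for every s ∈ ℂ, ∫_{S^{n−1}} f(Tη) |Tη|^s dS(η) = (1/|det T|) · ∫_{S^{n−1}} f(ξ) |T^{−1}ξ|^{−s} dS(ξ). -/

import Mathlib

open MeasureTheory Metric

open Set

noncomputable section

local notation "E" n => EuclideanSpace ℝ (Fin n)
local notation "dim" => Module.finrank ℝ

lemma key_polar (n : ℕ) (hn : 1 ≤ n) (H : (E n) → ℂ)
    (hH : ContinuousOn H {x : E n | x ≠ 0})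
    (hhom : ∀ t : ℝ, 0 < t → ∀ x : E n, x ≠ 0 → H (t • x) = (t : ℂ) ^ (-(n : ℤ)) * H x)
    (ρ : (E n) → ℝ) (hρc : ContinuousOn ρ {x : E n | x ≠ 0})
    (hρpos : ∀ x : E n, x ≠ 0 → 0 < ρ x)
    (hρhom : ∀ t : ℝ, 0 < t → ∀ x : E n, ρ (t • x) = ρ x) :
    ∫ x, Set.indicator {x : E n | ρ x < ‖x‖ ∧ ‖x‖ < Real.exp 1 * ρ x} H x
      = ∫ η : sphere (0 : E n) 1, H (η : E n)
        ∂((volume : Measure (E n)).toSphere) := by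
  have hdim : dim (E n) = n := finrank_euclideanSpace_fin
  have hnt : Nontrivial (E n) := by
    have h0 : 0 < dim (E n) := by rw [hdim]; exact hn
    exact Module.nontrivial_of_finrank_pos h0
  set e : ℝ := Real.exp 1 with he_def
  have he : 1 < e := by
    have := Real.add_one_le_exp 1; rw [he_def]; linarith
  set μ : Measure (E n) := volume with hμ
  set A : Set (E n) := {x : E n | ρ x < ‖x‖ ∧ ‖x‖ < e * ρ x} with hA
  set g : (sphere (0 : E n) 1 × Ioi (0:ℝ)) → ℂ :=
    fun z => Set.indicator (Ioo (ρ (z.1 : E n)) (e * ρ (z.1 : E n)))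
      (fun u => (u : ℂ) ^ (-(n : ℤ)) * H (z.1 : E n)) (z.2 : ℝ) with hg
  -- Step A: transfer to the product measure
  have stepA : ∫ x, Set.indicator A H x ∂μ
      = ∫ z, g z ∂((μ.toSphere).prod (.volumeIoiPow (dim (E n) - 1))) := by
    rw [← μ.measurePreserving_homeomorphUnitSphereProd.integral_comp
      (Homeomorph.measurableEmbedding _) g]
    conv_lhs => rw [← restrict_compl_singleton (μ := μ) (0 : E n),
      ← integral_subtype_comap (measurableSet_singleton (0 : E n)).compl
        (fun x => Set.indicator A H x)]
    refine integral_congr_ae (Filter.Eventually.of_forall fun x => ?_)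
    have hx0 : (x : E n) ≠ 0 := x.2
    have hnx : 0 < ‖(x : E n)‖ := norm_pos_iff.2 hx0
    have hsub : (‖(x : E n)‖⁻¹ • (x : E n)) ≠ 0 :=
      smul_ne_zero (inv_ne_zero hnx.ne') hx0
    have hρx : ρ (‖(x : E n)‖⁻¹ • (x : E n)) = ρ (x : E n) :=
      hρhom _ (inv_pos.2 hnx) _
    simp only [hg, homeomorphUnitSphereProd_apply_fst_coe,
      homeomorphUnitSphereProd_apply_snd_coe]
    by_cases hmem : (x : E n) ∈ A
    · rw [Set.indicator_of_mem hmem, Set.indicator_of_mem (by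
        rw [hρx]; exact ⟨hmem.1, hmem.2⟩)]
      have := hhom ‖(x : E n)‖ hnx _ hsub
      rw [smul_inv_smul₀ hnx.ne'] at this
      rw [this]
    · rw [Set.indicator_of_notMem hmem, Set.indicator_of_notMem (by
        rw [Set.mem_Ioo, hρx]; exact fun h => hmem ⟨h.1, h.2⟩)]
  -- continuity on the sphere
  have hη0 : ∀ η : sphere (0 : E n) 1, (η : E n) ≠ 0 :=
    fun η => ne_of_mem_sphere η.2 one_ne_zero
  have hHc : Continuous (fun η : sphere (0 : E n) 1 => H (η : E n)) :=
    hH.comp_continuous continuous_subtype_val hη0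
  have hρc' : Continuous (fun η : sphere (0 : E n) 1 => ρ (η : E n)) :=
    hρc.comp_continuous continuous_subtype_val hη0
  haveI : Nonempty (sphere (0 : E n) 1) :=
    ((NormedSpace.sphere_nonempty (x := (0 : E n)) (r := 1)).mpr zero_le_one).to_subtype
  obtain ⟨η₁, -, hη₁⟩ := isCompact_univ.exists_isMaxOn Set.univ_nonempty
    (hHc.norm.continuousOn (s := Set.univ))
  set M : ℝ := ‖H (η₁ : E n)‖ with hM_def
  have hM : ∀ η : sphere (0 : E n) 1, ‖H (η : E n)‖ ≤ M := fun η => hη₁ (Set.mem_univ η)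
  have hM0 : 0 ≤ M := norm_nonneg _
  obtain ⟨η₂, -, hη₂⟩ := isCompact_univ.exists_isMinOn Set.univ_nonempty
    (hρc'.continuousOn (s := Set.univ))
  obtain ⟨η₃, -, hη₃⟩ := isCompact_univ.exists_isMaxOn Set.univ_nonempty
    (hρc'.continuousOn (s := Set.univ))
  set c : ℝ := ρ (η₂ : E n) with hc_def
  set C : ℝ := ρ (η₃ : E n) with hC_def
  have hc : 0 < c := hρpos _ (hη0 η₂)
  have hcρ : ∀ η : sphere (0 : E n) 1, c ≤ ρ (η : E n) := fun η => hη₂ (Set.mem_univ η)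
  have hρC : ∀ η : sphere (0 : E n) 1, ρ (η : E n) ≤ C := fun η => hη₃ (Set.mem_univ η)
  have hC : 0 < C := lt_of_lt_of_le hc (hcρ η₃)
  set ν : Measure (Ioi (0:ℝ)) := Measure.volumeIoiPow (dim (E n) - 1) with hν
  -- measurability of g
  have hUmeas : MeasurableSet {z : sphere (0 : E n) 1 × Ioi (0:ℝ) |
      ((z.2 : ℝ)) ∈ Ioo (ρ (z.1 : E n)) (e * ρ (z.1 : E n))} := by
    have h1 : Continuous (fun z : sphere (0 : E n) 1 × Ioi (0:ℝ) => ρ (z.1 : E n)) :=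
      hρc'.comp continuous_fst
    have h2 : Continuous (fun z : sphere (0 : E n) 1 × Ioi (0:ℝ) => (z.2 : ℝ)) :=
      continuous_subtype_val.comp continuous_snd
    exact (measurableSet_lt h1.measurable h2.measurable).inter
      (measurableSet_lt h2.measurable ((continuous_const.mul h1).measurable))
  have hgU : g = Set.indicator {z : sphere (0 : E n) 1 × Ioi (0:ℝ) |
      ((z.2 : ℝ)) ∈ Ioo (ρ (z.1 : E n)) (e * ρ (z.1 : E n))}
      (fun z => ((z.2 : ℝ) : ℂ) ^ (-(n : ℤ)) * H (z.1 : E n)) := by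
    funext z
    show Set.indicator (Ioo (ρ (z.1 : E n)) (e * ρ (z.1 : E n)))
      (fun u => (u : ℂ) ^ (-(n : ℤ)) * H (z.1 : E n)) (z.2 : ℝ) = _
    by_cases hz : ((z.2 : ℝ)) ∈ Ioo (ρ (z.1 : E n)) (e * ρ (z.1 : E n))
    · rw [Set.indicator_of_mem hz]
      exact (Set.indicator_of_mem (show z ∈ {z : sphere (0 : E n) 1 × Ioi (0:ℝ) |
        ((z.2 : ℝ)) ∈ Ioo (ρ (z.1 : E n)) (e * ρ (z.1 : E n))} from hz)
        (fun z => ((z.2 : ℝ) : ℂ) ^ (-(n : ℤ)) * H (z.1 : E n))).symm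
    · rw [Set.indicator_of_notMem hz]
      exact (Set.indicator_of_notMem (show z ∉ {z : sphere (0 : E n) 1 × Ioi (0:ℝ) |
        ((z.2 : ℝ)) ∈ Ioo (ρ (z.1 : E n)) (e * ρ (z.1 : E n))} from hz)
        (fun z => ((z.2 : ℝ) : ℂ) ^ (-(n : ℤ)) * H (z.1 : E n))).symm
  have hgmeas : AEStronglyMeasurable g ((μ.toSphere).prod ν) := by
    rw [hgU]
    refine (StronglyMeasurable.indicator ?_ hUmeas).aestronglyMeasurable
    have hcont : Continuous (fun z : sphere (0 : E n) 1 × Ioi (0:ℝ) =>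
        ((z.2 : ℝ) : ℂ) ^ (-(n : ℤ)) * H (z.1 : E n)) := by
      refine Continuous.mul ?_ (hHc.comp continuous_fst)
      exact Continuous.zpow₀ (Complex.continuous_ofReal.comp
        (continuous_subtype_val.comp continuous_snd)) _
        (fun z => Or.inl (Complex.ofReal_ne_zero.mpr (ne_of_gt z.2.2)))
    exact hcont.stronglyMeasurable
  -- integrability of g
  set K : ℝ := c ^ (-(n : ℤ)) * M with hK_def
  have hK0 : 0 ≤ K := mul_nonneg (zpow_nonneg hc.le _) hM0
  have hint : Integrable g ((μ.toSphere).prod ν) := by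
    set t : Set (Ioi (0:ℝ)) := Subtype.val ⁻¹' Ioo c (e * C) with ht_def
    have htmeas : MeasurableSet t := measurable_subtype_coe measurableSet_Ioo
    refine Integrable.mono' (g := fun z : sphere (0 : E n) 1 × Ioi (0:ℝ) =>
      Set.indicator (Set.univ ×ˢ t) (fun _ => K) z) ?_ hgmeas
      (Filter.Eventually.of_forall fun z => ?_)
    · rw [integrable_indicator_iff (MeasurableSet.univ.prod htmeas)]
      rw [integrableOn_const_iff]
      right
      rw [Measure.prod_prod]
      refine ENNReal.mul_lt_top (measure_lt_top _ _) ?_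
      have hsub : t ⊆ Iio (⟨e * C + 1, Set.mem_Ioi.mpr (by nlinarith)⟩ : Ioi (0:ℝ)) := by
        intro r hr
        simp only [ht_def, Set.mem_preimage, Set.mem_Ioo] at hr
        simp only [Set.mem_Iio, ← Subtype.coe_lt_coe]
        exact lt_trans hr.2 (lt_add_one _)
      exact lt_of_le_of_lt (measure_mono hsub)
        (by rw [Measure.volumeIoiPow_apply_Iio]; exact ENNReal.ofReal_lt_top)
    · by_cases hz : ((z.2 : ℝ)) ∈ Ioo (ρ (z.1 : E n)) (e * ρ (z.1 : E n))
      · have hu : (z.2 : ℝ) ∈ Ioo c (e * C) := by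
          constructor
          · exact lt_of_le_of_lt (hcρ z.1) hz.1
          · exact lt_of_lt_of_le hz.2 (by
              have := hρC z.1
              nlinarith [hρpos (z.1 : E n) (hη0 z.1), he])
        have hzmem : z ∈ Set.univ ×ˢ t := ⟨Set.mem_univ _, hu⟩
        show ‖g z‖ ≤ Set.indicator (Set.univ ×ˢ t) (fun _ => K) z
        rw [Set.indicator_of_mem hzmem]
        show ‖Set.indicator (Ioo (ρ (z.1 : E n)) (e * ρ (z.1 : E n)))
          (fun u => (u : ℂ) ^ (-(n : ℤ)) * H (z.1 : E n)) (z.2 : ℝ)‖ ≤ K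
        rw [Set.indicator_of_mem hz]
        rw [norm_mul, norm_zpow, Complex.norm_real, Real.norm_eq_abs,
          abs_of_pos (lt_trans (lt_of_lt_of_le hc (hcρ z.1)) hz.1)]
        refine mul_le_mul ?_ (hM z.1) (norm_nonneg _) (zpow_nonneg hc.le _)
        rw [zpow_neg, zpow_neg, zpow_natCast, zpow_natCast]
        exact inv_anti₀ (pow_pos hc n)
          (pow_le_pow_left₀ hc.le (le_of_lt (lt_of_le_of_lt (hcρ z.1) hz.1)) n)
      · show ‖Set.indicator (Ioo (ρ (z.1 : E n)) (e * ρ (z.1 : E n)))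
          (fun u => (u : ℂ) ^ (-(n : ℤ)) * H (z.1 : E n)) (z.2 : ℝ)‖ ≤ _
        rw [Set.indicator_of_notMem hz, norm_zero]
        exact Set.indicator_apply_nonneg (fun _ => hK0)
  rw [stepA, integral_prod _ hint]
  refine integral_congr_ae (Filter.Eventually.of_forall fun η => ?_)
  -- inner integral computation
  set a : ℝ := ρ (η : E n) with ha_def
  have ha : 0 < a := hρpos _ (hη0 η)
  have hab : a ≤ e * a := le_mul_of_one_le_left ha.le he.le
  have hb : 0 < e * a := lt_of_lt_of_le ha hab
  set m : ℕ := dim (E n) - 1 with hm_def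
  have hmeasd : Measurable fun r : Ioi (0:ℝ) => Real.toNNReal ((r:ℝ) ^ m) :=
    (measurable_subtype_coe.pow_const _).real_toNNReal
  have hexp : (m:ℤ) + -(n:ℤ) = -1 := by
    have h1 : m = n - 1 := by rw [hm_def, hdim]
    rw [h1]
    omega
  calc ∫ r, g (η, r) ∂ν
      = ∫ r : Ioi (0:ℝ), Real.toNNReal ((r:ℝ) ^ m) •
          (Set.indicator (Ioo a (e*a)) (fun u => (u:ℂ) ^ (-(n:ℤ)) * H (η : E n)) ((r : ℝ)))
          ∂(Measure.comap Subtype.val volume) := by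
        rw [hν, Measure.volumeIoiPow]
        simp only [ENNReal.ofReal]
        rw [integral_withDensity_eq_integral_smul hmeasd]
    _ = ∫ u in Ioi (0:ℝ), Real.toNNReal (u ^ m) •
          (Set.indicator (Ioo a (e*a)) (fun v => (v:ℂ) ^ (-(n:ℤ)) * H (η : E n)) u) :=
        integral_subtype_comap measurableSet_Ioi (fun u => Real.toNNReal (u ^ m) •
          (Set.indicator (Ioo a (e*a)) (fun v => (v:ℂ) ^ (-(n:ℤ)) * H (η : E n)) u))
    _ = ∫ u in Ioi (0:ℝ), Set.indicator (Ioo a (e*a))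
          (fun v => v⁻¹ • H (η : E n)) u := by
        refine setIntegral_congr_fun measurableSet_Ioi (fun u hu => ?_)
        have hu0 : (0:ℝ) < u := hu
        by_cases hmem : u ∈ Ioo a (e*a)
        · rw [Set.indicator_of_mem hmem, Set.indicator_of_mem hmem,
            NNReal.smul_def, Real.coe_toNNReal _ (pow_nonneg hu0.le _)]
          have hzc : ((u:ℂ)) ^ (-(n:ℤ)) = ((u ^ (-(n:ℤ)) : ℝ) : ℂ) := by
            rw [Complex.ofReal_zpow]
          rw [hzc, Complex.real_smul, Complex.real_smul, ← mul_assoc,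
            ← Complex.ofReal_mul]
          congr 2
          rw [← zpow_natCast u m, ← zpow_add₀ (ne_of_gt hu0), hexp, zpow_neg_one]
        · rw [Set.indicator_of_notMem hmem, Set.indicator_of_notMem hmem, smul_zero]
    _ = ∫ u in Ioo a (e*a), u⁻¹ • H (η : E n) := by
        rw [setIntegral_indicator measurableSet_Ioo,
          Set.inter_eq_self_of_subset_right
            (show Ioo a (e*a) ⊆ Ioi (0:ℝ) from fun u hu => lt_trans ha hu.1)]
    _ = (∫ u in Ioo a (e*a), u⁻¹) • H (η : E n) := integral_smul_const _ _
    _ = H (η : E n) := by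
        have hlog : (∫ u in Ioo a (e*a), u⁻¹) = 1 := by
          rw [setIntegral_congr_set Ioo_ae_eq_Ioc,
            ← intervalIntegral.integral_of_le hab, integral_inv_of_pos ha hb,
            mul_div_assoc, div_self (ne_of_gt ha), mul_one, he_def, Real.log_exp]
        rw [hlog, one_smul]

/-- Sphere transformation lemma (`k = 0` case): for `f` continuous on `ℝⁿ \ {0}`,
positively homogeneous of degree `−n`, `T` invertible linear, and any `s ∈ ℂ`:
`∫_{S^{n−1}} f(Tη)|Tη|^s dS(η) = (1/|det T|) ∫_{S^{n−1}} f(ξ)|T⁻¹ξ|^{−s} dS(ξ)`. -/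
theorem stmt1 (n : ℕ) (hn : 1 ≤ n) (f : EuclideanSpace ℝ (Fin n) → ℂ)
    (hf : ContinuousOn f {ξ : EuclideanSpace ℝ (Fin n) | ξ ≠ 0})
    (hhom : ∀ t : ℝ, 0 < t → ∀ ξ : EuclideanSpace ℝ (Fin n), ξ ≠ 0 →
      f (t • ξ) = (t : ℂ) ^ (-(n : ℤ)) * f ξ)
    (T : EuclideanSpace ℝ (Fin n) ≃ₗ[ℝ] EuclideanSpace ℝ (Fin n))
    (s : ℂ) :
    ∫ η : sphere (0 : EuclideanSpace ℝ (Fin n)) 1,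
        f (T (η : EuclideanSpace ℝ (Fin n))) *
          (‖T (η : EuclideanSpace ℝ (Fin n))‖ : ℂ) ^ s
        ∂((volume : Measure (EuclideanSpace ℝ (Fin n))).toSphere)
      = (1 / |LinearMap.det (T : EuclideanSpace ℝ (Fin n) →ₗ[ℝ] EuclideanSpace ℝ (Fin n))| : ℝ) *
          ∫ ξ : sphere (0 : EuclideanSpace ℝ (Fin n)) 1,
            f (ξ : EuclideanSpace ℝ (Fin n)) *
              (‖T.symm (ξ : EuclideanSpace ℝ (Fin n))‖ : ℂ) ^ (-s)
            ∂((volume : Measure (EuclideanSpace ℝ (Fin n))).toSphere) := by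
  set μ : Measure (E n) := volume with hμ
  set e : ℝ := Real.exp 1 with he_def
  have he : 1 < e := by have := Real.add_one_le_exp 1; rw [he_def]; linarith
  -- continuity and nonvanishing of T, T.symm
  have hTc : Continuous fun x : E n => T x :=
    LinearMap.continuous_of_finiteDimensional (T : (E n) →ₗ[ℝ] E n)
  have hTsc : Continuous fun x : E n => T.symm x :=
    LinearMap.continuous_of_finiteDimensional (T.symm : (E n) →ₗ[ℝ] E n)
  have hT0 : ∀ x : E n, x ≠ 0 → T x ≠ 0 := fun x hx h =>
    hx ((LinearEquiv.map_eq_zero_iff T).mp h)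
  have hTs0 : ∀ x : E n, x ≠ 0 → T.symm x ≠ 0 := fun x hx h =>
    hx ((LinearEquiv.map_eq_zero_iff T.symm).mp h)
  -- cpow continuity helper
  have hcpow : ∀ w : ℂ, ContinuousOn (fun x : E n => ((‖x‖ : ℝ) : ℂ) ^ w)
      {x : E n | x ≠ 0} := by
    intro w x hx
    have h1 : ContinuousAt (fun z : ℂ => z ^ w) ((‖x‖ : ℝ) : ℂ) :=
      continuousAt_cpow_const
        (Complex.ofReal_mem_slitPlane.mpr (norm_pos_iff.mpr hx))
    have h2 : ContinuousAt (fun x : E n => ((‖x‖ : ℝ) : ℂ)) x :=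
      (Complex.continuous_ofReal.comp continuous_norm).continuousAt
    exact (h2.cpow continuousAt_const
      (Complex.ofReal_mem_slitPlane.mpr (norm_pos_iff.mpr hx))).continuousWithinAt
  -- homogeneous extensions
  set Atil : (E n) → ℂ := fun x => f (T x) * ((‖T x‖ : ℝ) : ℂ) ^ s *
    ((‖x‖ : ℝ) : ℂ) ^ (-s) with hAtil
  set Btil : (E n) → ℂ := fun y => f y * ((‖y‖ : ℝ) : ℂ) ^ s *
    ((‖T.symm y‖ : ℝ) : ℂ) ^ (-s) with hBtil
  have hcancel : ∀ t : ℝ, 0 < t → ((t : ℝ) : ℂ) ^ s * ((t : ℝ) : ℂ) ^ (-s) = 1 := by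
    intro t ht
    rw [← Complex.cpow_add _ _ (Complex.ofReal_ne_zero.mpr ht.ne')]
    simp
  have hAc : ContinuousOn Atil {x : E n | x ≠ 0} := by
    refine ContinuousOn.mul (ContinuousOn.mul ?_ ?_) (hcpow (-s))
    · exact hf.comp hTc.continuousOn (fun x hx => hT0 x hx)
    · exact (hcpow s).comp hTc.continuousOn (fun x hx => hT0 x hx)
  have hBc : ContinuousOn Btil {x : E n | x ≠ 0} := by
    refine ContinuousOn.mul (ContinuousOn.mul hf (hcpow s)) ?_
    exact (hcpow (-s)).comp hTsc.continuousOn (fun x hx => hTs0 x hx)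
  have hAhom : ∀ t : ℝ, 0 < t → ∀ x : E n, x ≠ 0 →
      Atil (t • x) = (t : ℂ) ^ (-(n : ℤ)) * Atil x := by
    intro t ht x hx
    have h1 : T (t • x) = t • T x := map_smul T t x
    have h2 : ‖t • T x‖ = t * ‖T x‖ := by rw [norm_smul, Real.norm_eq_abs, abs_of_pos ht]
    have h3 : ‖t • x‖ = t * ‖x‖ := by rw [norm_smul, Real.norm_eq_abs, abs_of_pos ht]
    simp only [hAtil, h1, h2, h3, hhom t ht (T x) (hT0 x hx), Complex.ofReal_mul,
      Complex.mul_cpow_ofReal_nonneg ht.le (norm_nonneg _)]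
    linear_combination ((t : ℂ) ^ (-(n : ℤ)) * f (T x) * ((‖T x‖ : ℝ) : ℂ) ^ s *
      ((‖x‖ : ℝ) : ℂ) ^ (-s)) * hcancel t ht
  have hBhom : ∀ t : ℝ, 0 < t → ∀ y : E n, y ≠ 0 →
      Btil (t • y) = (t : ℂ) ^ (-(n : ℤ)) * Btil y := by
    intro t ht y hy
    have h1 : T.symm (t • y) = t • T.symm y := map_smul T.symm t y
    have h2 : ‖t • T.symm y‖ = t * ‖T.symm y‖ := by
      rw [norm_smul, Real.norm_eq_abs, abs_of_pos ht]
    have h3 : ‖t • y‖ = t * ‖y‖ := by rw [norm_smul, Real.norm_eq_abs, abs_of_pos ht]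
    simp only [hBtil, h1, h2, h3, hhom t ht y hy, Complex.ofReal_mul,
      Complex.mul_cpow_ofReal_nonneg ht.le (norm_nonneg _)]
    linear_combination ((t : ℂ) ^ (-(n : ℤ)) * f y * ((‖y‖ : ℝ) : ℂ) ^ s *
      ((‖T.symm y‖ : ℝ) : ℂ) ^ (-s)) * hcancel t ht
  -- sphere integrals of the extensions
  have hsphereA : (∫ η : sphere (0 : E n) 1, f (T (η : E n)) *
        ((‖T (η : E n)‖ : ℝ) : ℂ) ^ s ∂μ.toSphere)
      = ∫ η : sphere (0 : E n) 1, Atil (η : E n) ∂μ.toSphere := by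
    refine integral_congr_ae (Filter.Eventually.of_forall fun η => ?_)
    have hnorm : ‖(η : E n)‖ = 1 := mem_sphere_zero_iff_norm.mp η.2
    simp only [hAtil, hnorm, Complex.ofReal_one, Complex.one_cpow, mul_one]
  have hsphereB : (∫ ξ : sphere (0 : E n) 1, Btil (ξ : E n) ∂μ.toSphere)
      = ∫ ξ : sphere (0 : E n) 1, f (ξ : E n) *
        ((‖T.symm (ξ : E n)‖ : ℝ) : ℂ) ^ (-s) ∂μ.toSphere := by
    refine integral_congr_ae (Filter.Eventually.of_forall fun ξ => ?_)
    have hnorm : ‖(ξ : E n)‖ = 1 := mem_sphere_zero_iff_norm.mp ξ.2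
    simp only [hBtil, hnorm, Complex.ofReal_one, Complex.one_cpow, mul_one]
  -- key lemma applications
  have hkey1 := key_polar n hn Atil hAc hAhom (fun _ => 1) continuousOn_const
    (fun x hx => one_pos) (fun t ht x => rfl)
  set ρ₂ : (E n) → ℝ := fun y => ‖y‖ / ‖T.symm y‖ with hρ₂
  have hρ₂c : ContinuousOn ρ₂ {x : E n | x ≠ 0} := by
    refine ContinuousOn.div continuous_norm.continuousOn hTsc.norm.continuousOn ?_
    exact fun x hx => (norm_pos_iff.mpr (hTs0 x hx)).ne'
  have hρ₂pos : ∀ y : E n, y ≠ 0 → 0 < ρ₂ y := fun y hy =>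
    div_pos (norm_pos_iff.mpr hy) (norm_pos_iff.mpr (hTs0 y hy))
  have hρ₂hom : ∀ t : ℝ, 0 < t → ∀ y : E n, ρ₂ (t • y) = ρ₂ y := by
    intro t ht y
    simp only [hρ₂, _root_.map_smul, norm_smul, Real.norm_eq_abs, abs_of_pos ht]
    rw [mul_div_mul_left _ _ (ne_of_gt ht)]
  have hkey2 := key_polar n hn Btil hBc hBhom ρ₂ hρ₂c hρ₂pos hρ₂hom
  -- change of variables
  have hdet : LinearMap.det (T : (E n) →ₗ[ℝ] E n) ≠ 0 :=
    (LinearEquiv.isUnit_det' T).ne_zero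
  have hA₂meas : MeasurableSet {y : E n | ρ₂ y < ‖y‖ ∧ ‖y‖ < Real.exp 1 * ρ₂ y} := by
    have hm : Measurable ρ₂ := measurable_norm.div hTsc.norm.measurable
    exact (measurableSet_lt hm measurable_norm).inter
      (measurableSet_lt measurable_norm (measurable_const.mul hm))
  have hA₂sub : {y : E n | ρ₂ y < ‖y‖ ∧ ‖y‖ < Real.exp 1 * ρ₂ y} ⊆ {y : E n | y ≠ 0} := by
    intro y hy h0
    rw [h0] at hy
    simp [hρ₂] at hy
  have hASMμ : AEStronglyMeasurable
      (Set.indicator {y : E n | ρ₂ y < ‖y‖ ∧ ‖y‖ < Real.exp 1 * ρ₂ y} Btil) μ := by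
    rw [aestronglyMeasurable_indicator_iff hA₂meas]
    exact (hBc.mono hA₂sub).aestronglyMeasurable hA₂meas
  -- membership correspondence under T
  have hmem : ∀ x : E n,
      (T x ∈ {y : E n | ρ₂ y < ‖y‖ ∧ ‖y‖ < Real.exp 1 * ρ₂ y}
        ↔ x ∈ {x : E n | 1 < ‖x‖ ∧ ‖x‖ < Real.exp 1 * 1}) := by
    intro x
    by_cases hx : x = 0
    · subst hx
      simp [hρ₂]
    · have hx0 : (0:ℝ) < ‖x‖ := norm_pos_iff.mpr hx
      have hTx0 : (0:ℝ) < ‖T x‖ := norm_pos_iff.mpr (hT0 x hx)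
      have hsymm : T.symm (T x) = x := T.symm_apply_apply x
      simp only [hρ₂, Set.mem_setOf_eq, hsymm, mul_one]
      constructor
      · rintro ⟨h1, h2⟩
        rw [div_lt_iff₀ hx0] at h1
        rw [← mul_div_assoc, lt_div_iff₀ hx0] at h2
        constructor
        · nlinarith
        · nlinarith
      · rintro ⟨h1, h2⟩
        constructor
        · rw [div_lt_iff₀ hx0]; nlinarith
        · rw [← mul_div_assoc, lt_div_iff₀ hx0]; nlinarith
  have hptwise : ∀ x : E n,
      Set.indicator {x : E n | 1 < ‖x‖ ∧ ‖x‖ < Real.exp 1 * 1} Atil x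
      = Set.indicator {y : E n | ρ₂ y < ‖y‖ ∧ ‖y‖ < Real.exp 1 * ρ₂ y} Btil (T x) := by
    intro x
    have hBT : Btil (T x) = Atil x := by
      simp only [hBtil, hAtil, T.symm_apply_apply]
    by_cases hx : x ∈ {x : E n | 1 < ‖x‖ ∧ ‖x‖ < Real.exp 1 * 1}
    · rw [Set.indicator_of_mem hx, Set.indicator_of_mem ((hmem x).mpr hx), hBT]
    · rw [Set.indicator_of_notMem hx,
        Set.indicator_of_notMem (fun h => hx ((hmem x).mp h))]
  have hmap : Measure.map (fun x : E n => T x) μ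
      = ENNReal.ofReal |(LinearMap.det (T : (E n) →ₗ[ℝ] E n))⁻¹| • μ :=
    Measure.map_linearMap_addHaar_eq_smul_addHaar μ hdet
  have hASMmap : AEStronglyMeasurable
      (Set.indicator {y : E n | ρ₂ y < ‖y‖ ∧ ‖y‖ < Real.exp 1 * ρ₂ y} Btil)
      (Measure.map (fun x : E n => T x) μ) := by
    rw [hmap]
    exact hASMμ.mono_ac Measure.smul_absolutelyContinuous
  have hchange : (∫ x, Set.indicator {x : E n | 1 < ‖x‖ ∧ ‖x‖ < Real.exp 1 * 1} Atil x ∂μ)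
      = (1 / |LinearMap.det (T : (E n) →ₗ[ℝ] E n)| : ℝ) •
        ∫ y, Set.indicator {y : E n | ρ₂ y < ‖y‖ ∧ ‖y‖ < Real.exp 1 * ρ₂ y} Btil y ∂μ := by
    calc (∫ x, Set.indicator {x : E n | 1 < ‖x‖ ∧ ‖x‖ < Real.exp 1 * 1} Atil x ∂μ)
        = ∫ x, Set.indicator {y : E n | ρ₂ y < ‖y‖ ∧ ‖y‖ < Real.exp 1 * ρ₂ y} Btil (T x) ∂μ :=
          integral_congr_ae (Filter.Eventually.of_forall hptwise)
      _ = ∫ y, Set.indicator {y : E n | ρ₂ y < ‖y‖ ∧ ‖y‖ < Real.exp 1 * ρ₂ y} Btil y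
            ∂(Measure.map (fun x : E n => T x) μ) :=
          (integral_map hTc.aemeasurable hASMmap).symm
      _ = _ := by
          rw [hmap, integral_smul_measure, ENNReal.toReal_ofReal (abs_nonneg _),
            abs_inv, one_div]
  calc (∫ η : sphere (0 : E n) 1, f (T (η : E n)) *
          ((‖T (η : E n)‖ : ℝ) : ℂ) ^ s ∂μ.toSphere)
      = ∫ η : sphere (0 : E n) 1, Atil (η : E n) ∂μ.toSphere := hsphereA
    _ = ∫ x, Set.indicator {x : E n | 1 < ‖x‖ ∧ ‖x‖ < Real.exp 1 * 1} Atil x ∂μ := hkey1.symm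
    _ = (1 / |LinearMap.det (T : (E n) →ₗ[ℝ] E n)| : ℝ) •
          ∫ y, Set.indicator {y : E n | ρ₂ y < ‖y‖ ∧ ‖y‖ < Real.exp 1 * ρ₂ y} Btil y ∂μ :=
        hchange
    _ = (1 / |LinearMap.det (T : (E n) →ₗ[ℝ] E n)| : ℝ) •
          ∫ ξ : sphere (0 : E n) 1, Btil (ξ : E n) ∂μ.toSphere :=
        congrArg (fun z => (1 / |LinearMap.det (T : (E n) →ₗ[ℝ] E n)| : ℝ) • z) hkey2
    _ = (1 / |LinearMap.det (T : (E n) →ₗ[ℝ] E n)| : ℝ) •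
          ∫ ξ : sphere (0 : E n) 1, f (ξ : E n) *
            ((‖T.symm (ξ : E n)‖ : ℝ) : ℂ) ^ (-s) ∂μ.toSphere :=
        congrArg (fun z => (1 / |LinearMap.det (T : (E n) →ₗ[ℝ] E n)| : ℝ) • z) hsphereB
    _ = _ := Complex.real_smul
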